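/- Let G be a finite group, M = (D, σ, α) a connected combinatorial map and κ a local G-tension on M. Then there exist a connected combinatorial map M' and a covering p : M' → M such that κ∘p is a global G-tension on M', and which is minimal in the following sense: for every connected combinatorial map M'' and every covering r : M'' → M such that κ∘r is a global G-tension on M'', there exists a covering q : M'' → M' with p∘q = r. -/

import Mathlib

open Equiv

/-- The setoid on darts whose classes are the cycles (orbits) of a permutation. -/
def Equiv.Perm.cycleSetoid {D : Type*} (τ : Equiv.Perm D) : Setoid D :=
  ⟨τ.SameCycle, ⟨fun x => Equiv.Perm.SameCycle.refl τ x, fun h => h.symm, fun h h' => h.trans h'⟩⟩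

/-- The number of cycles (orbits) of a permutation. -/
noncomputable def Equiv.Perm.cycleCount {D : Type*} (τ : Equiv.Perm D) : ℕ :=
  Nat.card (Quotient τ.cycleSetoid)

/-- The ordered product of the values of `κ` around the `τ`-orbit of the dart `d`. -/
noncomputable def aroundProd {D G : Type*} [Group G] (τ : Equiv.Perm D) (κ : D → G) (d : D) : G :=
  ((List.range (Function.minimalPeriod (⇑τ) d)).map fun i => κ ((τ ^ i) d)).prod

/-- A `G`-labelling of a combinatorial map with edge involution `α`. -/
def IsGLabelling {D G : Type*} [Group G] (α : Equiv.Perm D) (κ : D → G) : Prop :=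
  ∀ d, κ (α d) = (κ d)⁻¹

/-- A `G`-flow on the combinatorial map `(D, σ, α)`. -/
def IsGFlow {D G : Type*} [Group G] (σ α : Equiv.Perm D) (κ : D → G) : Prop :=
  IsGLabelling α κ ∧ ∀ d, aroundProd σ κ d = 1

/-- A local `G`-tension on the combinatorial map `(D, σ, α)`: the product around every
face (orbit of `σ ∘ α`) is the identity. -/
def IsLocalTension {D G : Type*} [Group G] (σ α : Equiv.Perm D) (κ : D → G) : Prop :=
  IsGLabelling α κ ∧ ∀ d, aroundProd (σ * α) κ d = 1

/-- A closed walk in the combinatorial map `(D, σ, α)`, as a nonempty list of darts. -/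
def IsClosedWalk {D : Type*} (σ α : Equiv.Perm D) (W : List D) : Prop :=
  ∃ h : W ≠ [], W.Chain' (fun a b => σ.SameCycle (α a) b) ∧
    σ.SameCycle (α (W.getLast h)) (W.head h)

/-- A global `G`-tension on the combinatorial map `(D, σ, α)`. -/
def IsGlobalTension {D G : Type*} [Group G] (σ α : Equiv.Perm D) (κ : D → G) : Prop :=
  IsGLabelling α κ ∧ ∀ W : List D, IsClosedWalk σ α W → (W.map κ).prod = 1

/-- Connectivity of the combinatorial map `(D, σ, α)`: the group generated by `σ` and `α`
acts transitively on the darts. -/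
def MapConnected {D : Type*} (σ α : Equiv.Perm D) : Prop :=
  ∀ d d' : D, ∃ g ∈ Subgroup.closure ({σ, α} : Set (Equiv.Perm D)), g d = d'

/-- A covering of combinatorial maps `(D', σ', α') → (D, σ, α)`. -/
def IsMapCovering {D' D : Type*} (σ' α' : Equiv.Perm D') (σ α : Equiv.Perm D)
    (p : D' → D) : Prop :=
  Function.Surjective p ∧ (∀ d, p (σ' d) = σ (p d)) ∧ (∀ d, p (α' d) = α (p d)) ∧
    ∀ d₁ d₂, σ'.SameCycle d₁ d₂ → p d₁ = p d₂ → d₁ = d₂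



section Helpers
variable {X Y : Type*}

theorem Equiv.Perm.apply_inv_self (f : Equiv.Perm X) (x : X) : f (f⁻¹ x) = x :=
  Equiv.apply_symm_apply f x

theorem Equiv.Perm.inv_apply_self (f : Equiv.Perm X) (x : X) : f⁻¹ (f x) = x :=
  Equiv.symm_apply_apply f x

lemma fixed_zpow (g : Equiv.Perm X) (F : X → Y) (h : ∀ x, F (g x) = F x) :
    ∀ (i : ℤ) (x : X), F ((g ^ i) x) = F x := by
  have h' : ∀ x, F (g⁻¹ x) = F x := fun x => by
    conv_rhs => rw [← Equiv.Perm.apply_inv_self g x, h]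
  intro i
  induction i using Int.induction_on with
  | zero => simp
  | succ i ih => intro x; rw [zpow_add_one, Equiv.Perm.mul_apply, ih, h]
  | pred i ih => intro x; rw [zpow_sub_one, Equiv.Perm.mul_apply, ih, h']

lemma fixed_sameCycle (g : Equiv.Perm X) (F : X → Y) (h : ∀ x, F (g x) = F x)
    {x y : X} (hxy : g.SameCycle x y) : F x = F y := by
  obtain ⟨i, rfl⟩ := hxy
  exact (fixed_zpow g F h i x).symm

lemma closure_pair_iff (a b : Equiv.Perm X) (P : X → Prop)
    (ha : ∀ x, P x ↔ P (a x)) (hb : ∀ x, P x ↔ P (b x)) :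
    ∀ w ∈ Subgroup.closure ({a, b} : Set (Equiv.Perm X)), ∀ x, P x ↔ P (w x) := by
  intro w hw
  induction hw using Subgroup.closure_induction with
  | mem g hg =>
    rcases hg with rfl | rfl
    · exact ha
    · intro x; simpa using hb x
  | one => simp
  | mul u v _ _ hu hv => intro x; rw [Equiv.Perm.mul_apply]; exact (hv x).trans (hu (v x))
  | inv u _ hu =>
    intro x
    have := hu (u⁻¹ x)
    simp only [Equiv.Perm.apply_inv_self] at this
    exact this.symm

end Helpers

section Walks
variable {E G : Type*} [Group G]

/-- A walk from the vertex of `v` to the vertex of `w`. -/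
def WalkFromTo (σ α : Equiv.Perm E) (v w : E) (W : List E) : Prop :=
  ∃ h : W ≠ [], W.Chain' (fun a b => σ.SameCycle (α a) b) ∧
    σ.SameCycle v (W.head h) ∧ σ.SameCycle (α (W.getLast h)) w

lemma walk_concat_closed {σ α : Equiv.Perm E} {v w : E} {W W₂ : List E}
    (hW : WalkFromTo σ α v w W) (hW₂ : WalkFromTo σ α w v W₂) :
    IsClosedWalk σ α (W ++ W₂) := by
  obtain ⟨h1, hc1, hh1, hl1⟩ := hW
  obtain ⟨h2, hc2, hh2, hl2⟩ := hW₂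
  refine ⟨by simp [h1], ?_, ?_⟩
  · unfold List.Chain'; rw [List.isChain_append]
    refine ⟨hc1, hc2, ?_⟩
    intro x hx y hy
    rw [List.getLast?_eq_getLast h1, Option.mem_some_iff] at hx
    rw [List.head?_eq_head h2, Option.mem_some_iff] at hy
    subst hx; subst hy
    exact hl1.trans hh2
  · rw [List.getLast_append_of_ne_nil _ h2, List.head_append_left h1]
    exact hl2.trans hh1

lemma walk_reverse {σ α : Equiv.Perm E} (hinv : ∀ e, α (α e) = e) {v w : E} {W : List E}
    (hW : WalkFromTo σ α v w W) : WalkFromTo σ α w v ((W.map α).reverse) := by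
  obtain ⟨h1, hc1, hh1, hl1⟩ := hW
  have hne : (W.map α).reverse ≠ [] := by simp [h1]
  refine ⟨hne, ?_, ?_, ?_⟩
  · unfold List.Chain'; rw [List.isChain_reverse, List.isChain_map]
    refine hc1.imp ?_
    intro a b hab
    show σ.SameCycle (α (α b)) (α a)
    rw [hinv]
    exact (hab.symm).trans ⟨0, by simp⟩ |>.trans (Equiv.Perm.SameCycle.refl σ (α a)) |>.symm.symm
  · rw [List.head_reverse, List.getLast_map]
    exact hl1.symm
  · rw [List.getLast_reverse, List.head_map, hinv]
    exact hh1.symm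


lemma walk_height_unique {σ α : Equiv.Perm E} (hinv : ∀ e, α (α e) = e)
    {κ : E → G} (hglob : IsGlobalTension σ α κ) {v w : E} {W W' : List E}
    (hW : WalkFromTo σ α v w W) (hW' : WalkFromTo σ α v w W') :
    (W.map κ).prod = (W'.map κ).prod := by
  have hC := hglob.2 _ (walk_concat_closed hW (walk_reverse hinv hW'))
  rw [List.map_append, List.prod_append] at hC
  have h2 : (((W'.map α).reverse).map κ).prod = ((W'.map κ).prod)⁻¹ := by
    rw [List.map_reverse, List.prod_reverse_noncomm, List.map_map, List.map_map]
    have h3 : (((fun x => x⁻¹) ∘ κ) ∘ ⇑α : E → G) = κ := funext fun e => by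
      simp [Function.comp, hglob.1 e]
    rw [h3]
  rw [h2] at hC
  exact (mul_inv_eq_one.mp hC)

lemma walk_exists {σ α : Equiv.Perm E} (hinv : ∀ e, α (α e) = e)
    (hconn : MapConnected σ α) (e₀ : E) :
    ∀ e, ∃ W, WalkFromTo σ α e₀ e W := by
  have hαinv : ∀ x, α⁻¹ x = α x := fun x => by
    conv_lhs => rw [← hinv x, Equiv.Perm.inv_apply_self]
  set P : E → Prop := fun e => ∃ W, WalkFromTo σ α e₀ e W with hP
  have hσ : ∀ e, P e ↔ P (σ e) := by
    intro e
    constructor <;> rintro ⟨W, h1, hc, hh, hl⟩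
    · exact ⟨W, h1, hc, hh, hl.trans ⟨1, by simp⟩⟩
    · exact ⟨W, h1, hc, hh, hl.trans ⟨-1, by simp⟩⟩
  have hαfwd : ∀ e, P e → P (α e) := by
    rintro e ⟨W, h1, hc, hh, hl⟩
    refine ⟨W ++ [e], by simp, ?_, ?_, ?_⟩
    · unfold List.Chain'; rw [List.isChain_append]
      refine ⟨hc, List.isChain_singleton e, ?_⟩
      intro x hx y hy
      rw [List.getLast?_eq_getLast h1, Option.mem_some_iff] at hx
      simp only [List.head?_cons, Option.mem_some_iff] at hy
      subst hx; subst hy; exact hl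
    · rw [List.head_append_left h1]; exact hh
    · rw [List.getLast_append_of_ne_nil _ (by simp : ([e] : List E) ≠ [])]
      simp only [List.getLast_singleton]
      exact Equiv.Perm.SameCycle.refl σ _
  have hα : ∀ e, P e ↔ P (α e) := by
    intro e
    refine ⟨hαfwd e, fun h => ?_⟩
    have := hαfwd (α e) h
    rwa [hinv] at this
  have base : P e₀ := by
    refine ⟨[e₀, α e₀], by simp, ?_, ?_, ?_⟩
    · exact List.isChain_pair.mpr (Equiv.Perm.SameCycle.refl σ (α e₀))
    · exact Equiv.Perm.SameCycle.refl σ e₀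
    · show σ.SameCycle (α ((([e₀, α e₀] : List E)).getLast (by simp))) e₀
      simp only [List.getLast, hinv]
      exact Equiv.Perm.SameCycle.refl σ e₀
  intro e
  obtain ⟨g, hg, hge⟩ := hconn e₀ e
  exact hge ▸ ((closure_pair_iff σ α P hσ hα g hg e₀).mp base)

lemma potential_exists {σ α : Equiv.Perm E} (hinv : ∀ e, α (α e) = e)
    (hconn : MapConnected σ α) {κ : E → G} (hglob : IsGlobalTension σ α κ) (e₀ : E) :
    ∃ f : E → G, f e₀ = 1 ∧ (∀ x y, σ.SameCycle x y → f x = f y) ∧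
      ∀ e, f (α e) = f e * κ e := by
  have hex := walk_exists hinv hconn e₀
  set f : E → G := fun e => (((hex e).choose).map κ).prod with hf
  have key : ∀ e W, WalkFromTo σ α e₀ e W → f e = (W.map κ).prod := by
    intro e W hW
    exact walk_height_unique hinv hglob (hex e).choose_spec hW
  refine ⟨f, ?_, ?_, ?_⟩
  · have h0 := (hex e₀).choose_spec
    obtain ⟨h1, hc, hh, hl⟩ := h0
    exact hglob.2 _ ⟨h1, hc, hl.trans hh⟩
  · intro x y hxy
    obtain ⟨h1, hc, hh, hl⟩ := (hex x).choose_spec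
    exact (key y _ ⟨h1, hc, hh, hl.trans hxy⟩).symm
  · intro e
    obtain ⟨h1, hc, hh, hl⟩ := (hex e).choose_spec
    have hW' : WalkFromTo σ α e₀ (α e) ((hex e).choose ++ [e]) := by
      refine ⟨by simp [h1], ?_, ?_, ?_⟩
      · unfold List.Chain'; rw [List.isChain_append]
        refine ⟨hc, List.isChain_singleton e, ?_⟩
        intro a ha b hb
        rw [List.getLast?_eq_getLast h1, Option.mem_some_iff] at ha
        simp only [List.head?_cons, Option.mem_some_iff] at hb
        subst ha; subst hb; exact hl
      · rw [List.head_append_left h1]; exact hh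
      · rw [List.getLast_append_of_ne_nil _ (by simp : ([e] : List E) ≠ [])]
        simp only [List.getLast_singleton]
        exact Equiv.Perm.SameCycle.refl σ _
    rw [key _ _ hW']
    simp [f]

lemma tension_of_potential {σ α : Equiv.Perm E} {κ : E → G} {f : E → G}
    (hlab : IsGLabelling α κ)
    (hf1 : ∀ x y, σ.SameCycle x y → f x = f y)
    (hf2 : ∀ e, f (α e) = f e * κ e) :
    IsGlobalTension σ α κ := by
  refine ⟨hlab, ?_⟩
  have tele : ∀ (W : List E) (hW : W ≠ []), W.Chain' (fun a b => σ.SameCycle (α a) b) →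
      (W.map κ).prod = (f (W.head hW))⁻¹ * f (α (W.getLast hW)) := by
    intro W
    induction W with
    | nil => intro h; exact absurd rfl h
    | cons a t ih =>
      intro _ hc
      cases t with
      | nil =>
        simp only [List.map_cons, List.map_nil, List.prod_cons, List.prod_nil, mul_one,
          List.head_cons, List.getLast_singleton]
        rw [hf2 a]
        group
      | cons b t' =>
        unfold List.Chain' at hc; rw [List.isChain_cons_cons] at hc
        have hrec := ih (by simp) hc.2
        simp only [List.map_cons, List.prod_cons] at hrec ⊢
        rw [hrec]
        have hfb : f b = f a * κ a := by
          rw [← hf2 a]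
          exact (hf1 _ _ hc.1).symm
        rw [List.head_cons, List.getLast_cons (by simp : (b :: t' : List E) ≠ [])]
        rw [List.head_cons] at hrec
        rw [hfb]
        simp only [List.head_cons]
        group
  rintro W ⟨hW, hc, hclosed⟩
  rw [tele W hW hc, hf1 _ _ hclosed]
  group

end Walks

/-- Every local `G`-tension `κ` on a connected combinatorial map `M` admits a minimal global
covering: a covering `p : M' → M` by a connected map such that `κ∘p` is a global `G`-tension,
through which every other such covering factors. -/
theorem exists_minimal_global_covering
    {D : Type} [Fintype D] [Nonempty D] (σ α : Equiv.Perm D)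
    (hinv : ∀ d, α (α d) = d) (hfpf : ∀ d, α d ≠ d)
    (hconn : MapConnected σ α)
    {G : Type} [Group G] [Fintype G]
    (κ : D → G) (hκ : IsLocalTension σ α κ) :
    ∃ (D' : Type) (_ : Fintype D') (σ' α' : Equiv.Perm D'),
      (∀ d, α' (α' d) = d) ∧ (∀ d, α' d ≠ d) ∧ MapConnected σ' α' ∧
      ∃ p : D' → D, IsMapCovering σ' α' σ α p ∧ IsGlobalTension σ' α' (κ ∘ p) ∧
        ∀ (D'' : Type) (_ : Fintype D'') (σ'' α'' : Equiv.Perm D''),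
          (∀ d, α'' (α'' d) = d) → (∀ d, α'' d ≠ d) → MapConnected σ'' α'' →
          ∀ r : D'' → D, IsMapCovering σ'' α'' σ α r → IsGlobalTension σ'' α'' (κ ∘ r) →
          ∃ q : D'' → D', IsMapCovering σ'' α'' σ' α' q ∧ p ∘ q = r := by
  classical
  obtain ⟨d₀⟩ := ‹Nonempty D›
  -- The big derived map on `D × G`
  set σh : Equiv.Perm (D × G) := Equiv.prodCongr σ (Equiv.refl G) with hσhdef
  have hσhapp : ∀ x : D × G, σh x = (σ x.1, x.2) := fun x => rfl
  have hαinvol : Function.Involutive (fun x : D × G => (α x.1, x.2 * κ x.1)) := by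
    intro x
    simp only [hinv, hκ.1 x.1, mul_assoc, mul_inv_cancel, mul_one]
  set αh : Equiv.Perm (D × G) := hαinvol.toPerm _ with hαhdef
  have hαhapp : ∀ x : D × G, αh x = (α x.1, x.2 * κ x.1) := fun x => rfl
  have hαhinv : ∀ x, αh (αh x) = x := fun x => hαinvol x
  have hαhinv' : ∀ x, αh⁻¹ x = αh x := fun x => by
    conv_lhs => rw [← hαhinv x, Equiv.Perm.inv_apply_self]
  -- reachability from the base dart
  set base : D × G := (d₀, 1) with hbase
  set reach : D × G → Prop :=
    fun x => ∃ w ∈ Subgroup.closure ({σh, αh} : Set (Equiv.Perm (D × G))), w base = x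
    with hreach
  have hreach_base : reach base := ⟨1, one_mem _, rfl⟩
  have hreach_mul : ∀ w ∈ Subgroup.closure ({σh, αh} : Set (Equiv.Perm (D × G))),
      ∀ x, reach x → reach (w x) := by
    rintro w hw x ⟨u, hu, rfl⟩
    exact ⟨w * u, mul_mem hw hu, rfl⟩
  have hreach_iff : ∀ w ∈ Subgroup.closure ({σh, αh} : Set (Equiv.Perm (D × G))),
      ∀ x, reach x ↔ reach (w x) := by
    intro w hw x
    refine ⟨hreach_mul w hw x, fun h => ?_⟩
    have := hreach_mul w⁻¹ (inv_mem hw) (w x) h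
    rwa [Equiv.Perm.inv_apply_self] at this
  have hσmem : σh ∈ Subgroup.closure ({σh, αh} : Set (Equiv.Perm (D × G))) :=
    Subgroup.subset_closure (by simp)
  have hαmem : αh ∈ Subgroup.closure ({σh, αh} : Set (Equiv.Perm (D × G))) :=
    Subgroup.subset_closure (by simp)
  -- the subtype of reachable darts
  set σiff : ∀ x, reach x ↔ reach (σh x) := hreach_iff σh hσmem
  set αiff : ∀ x, reach x ↔ reach (αh x) := hreach_iff αh hαmem
  refine ⟨{x : D × G // reach x}, Fintype.ofFinite _,
    σh.subtypePerm (fun x => (σiff x).symm), αh.subtypePerm (fun x => (αiff x).symm), ?_, ?_, ?_, ?_⟩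
  · intro x
    apply Subtype.ext
    exact hαhinv x.val
  · intro x hx
    have := congrArg (fun y => y.val.1) hx
    exact hfpf x.val.1 this
  · -- connectivity of the reachable component
    set σ' := σh.subtypePerm (fun x => (σiff x).symm) with hσ'def
    set α' := αh.subtypePerm (fun x => (αiff x).symm) with hα'def
    have transfer : ∀ w ∈ Subgroup.closure ({σh, αh} : Set (Equiv.Perm (D × G))),
        ∀ (x : {x : D × G // reach x}) (h : reach (w x.val)),
        ∃ g ∈ Subgroup.closure ({σ', α'} : Set (Equiv.Perm {x : D × G // reach x})),
          (g x).val = w x.val := by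
      intro w hw
      induction hw using Subgroup.closure_induction with
      | mem g hg =>
        rcases hg with rfl | rfl
        · exact fun x h => ⟨σ', Subgroup.subset_closure (by simp), rfl⟩
        · exact fun x h => ⟨α', Subgroup.subset_closure (by simp), rfl⟩
      | one => exact fun x h => ⟨1, one_mem _, by simp⟩
      | mul u v hu hv ihu ihv =>
        intro x h
        have hvx : reach (v x.val) := hreach_mul v hv x.val x.2
        obtain ⟨g₂, hg₂, hg₂v⟩ := ihv x hvx
        have hux : reach (u (⟨v x.val, hvx⟩ : {x : D × G // reach x}).val) := by
          simpa [Equiv.Perm.mul_apply] using h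
        obtain ⟨g₁, hg₁, hg₁v⟩ := ihu ⟨v x.val, hvx⟩ hux
        refine ⟨g₁ * g₂, mul_mem hg₁ hg₂, ?_⟩
        have : g₂ x = ⟨v x.val, hvx⟩ := Subtype.ext hg₂v
        rw [Equiv.Perm.mul_apply, this, hg₁v, Equiv.Perm.mul_apply]
      | inv u hu ihu =>
        intro x h
        have hux : reach (u (⟨u⁻¹ x.val, h⟩ : {x : D × G // reach x}).val) := by
          simpa using x.2
        obtain ⟨g, hg, hgv⟩ := ihu ⟨u⁻¹ x.val, h⟩ hux
        refine ⟨g⁻¹, inv_mem hg, ?_⟩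
        have hx : g ⟨u⁻¹ x.val, h⟩ = x := Subtype.ext (by simpa using hgv)
        rw [← hx, Equiv.Perm.inv_apply_self, hx]
    intro x y
    have hbase' : reach base := hreach_base
    obtain ⟨wx, hwx, hx⟩ := x.2
    obtain ⟨wy, hwy, hy⟩ := y.2
    obtain ⟨gx, hgx, hgxv⟩ := transfer wx hwx ⟨base, hbase'⟩ (hx ▸ x.2)
    obtain ⟨gy, hgy, hgyv⟩ := transfer wy hwy ⟨base, hbase'⟩ (hy ▸ y.2)
    have hgx' : gx ⟨base, hbase'⟩ = x := Subtype.ext (hgxv.trans hx)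
    have hgy' : gy ⟨base, hbase'⟩ = y := Subtype.ext (hgyv.trans hy)
    refine ⟨gy * gx⁻¹, mul_mem hgy (inv_mem hgx), ?_⟩
    rw [Equiv.Perm.mul_apply, ← hgx', Equiv.Perm.inv_apply_self, hgy']
  · set σ' := σh.subtypePerm (fun x => (σiff x).symm) with hσ'def
    set α' := αh.subtypePerm (fun x => (αiff x).symm) with hα'def
    refine ⟨fun x => x.val.1, ⟨?_, fun x => rfl, fun x => rfl, ?_⟩, ?_, ?_⟩
    · -- surjectivity of p
      intro d
      set P : D → Prop := fun d => ∃ g : G, reach (d, g) with hPdef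
      have hPσ : ∀ d, P d ↔ P (σ d) := by
        intro d
        constructor
        · rintro ⟨g, hg⟩; exact ⟨g, (σiff (d, g)).mp hg⟩
        · rintro ⟨g, hg⟩
          exact ⟨g, (σiff (d, g)).mpr (by rwa [hσhapp])⟩
      have hPα : ∀ d, P d ↔ P (α d) := by
        intro d
        constructor
        · rintro ⟨g, hg⟩
          refine ⟨g * κ d, ?_⟩
          have := (αiff (d, g)).mp hg
          rwa [hαhapp] at this
        · rintro ⟨g, hg⟩
          refine ⟨g * κ (α d), ?_⟩
          have := (αiff (α d, g)).mp hg
          rwa [hαhapp, hinv] at this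
      have hbased : P d₀ := ⟨1, hreach_base⟩
      obtain ⟨w, hw, hwd⟩ := hconn d₀ d
      obtain ⟨g, hg⟩ := hwd ▸ (closure_pair_iff σ α P hPσ hPα w hw d₀).mp hbased
      exact ⟨⟨(d, g), hg⟩, rfl⟩
    · -- injectivity of p on σ'-cycles
      intro x y hxy hpxy
      have := fixed_sameCycle σ' (fun z => z.val.2) (fun z => rfl) hxy
      exact Subtype.ext (Prod.ext hpxy this)
    · -- κ ∘ p is a global tension
      refine tension_of_potential (f := fun z => z.val.2) ?_ ?_ ?_
      · intro x
        exact hκ.1 x.val.1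
      · intro x y hxy
        exact fixed_sameCycle σ' (fun z => z.val.2) (fun z => rfl) hxy
      · intro x; rfl
    · -- minimality
      intro D'' _ σ'' α'' hinv'' hfpf'' hconn'' r hrcov hrglob
      obtain ⟨e₀, hre₀⟩ := hrcov.1 d₀
      obtain ⟨f, hf0, hfc, hfα⟩ := potential_exists hinv'' hconn'' hrglob e₀
      set q0 : D'' → D × G := fun e => (r e, f e) with hq0
      have hq0σ : ∀ e, q0 (σ'' e) = σh (q0 e) := by
        intro e
        rw [hσhapp]
        exact Prod.ext (hrcov.2.1 e) (hfc e (σ'' e) ⟨1, by simp⟩).symm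
      have hq0α : ∀ e, q0 (α'' e) = αh (q0 e) := by
        intro e
        rw [hαhapp]
        exact Prod.ext (hrcov.2.2.1 e) (hfα e)
      have hq0base : q0 e₀ = base := by
        rw [hbase]
        exact Prod.ext hre₀ hf0
      have hq0reach : ∀ e, reach (q0 e) := by
        set P'' : D'' → Prop := fun e => reach (q0 e) with hP''
        have hP''σ : ∀ e, P'' e ↔ P'' (σ'' e) := fun e => by
          show reach (q0 e) ↔ reach (q0 (σ'' e))
          rw [hq0σ e]; exact σiff (q0 e)
        have hP''α : ∀ e, P'' e ↔ P'' (α'' e) := fun e => by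
          show reach (q0 e) ↔ reach (q0 (α'' e))
          rw [hq0α e]; exact αiff (q0 e)
        have hbase'' : P'' e₀ := by
          show reach (q0 e₀)
          rw [hq0base]; exact hreach_base
        intro e
        obtain ⟨w, hw, hwd⟩ := hconn'' e₀ e
        exact hwd ▸ (closure_pair_iff σ'' α'' P'' hP''σ hP''α w hw e₀).mp hbase''
      refine ⟨fun e => ⟨q0 e, hq0reach e⟩, ⟨?_, ?_, ?_, ?_⟩, ?_⟩
      · -- surjectivity of q
        set S : D × G → Prop := fun x => ∃ e, q0 e = x with hS
        have hSσ : ∀ x, S x ↔ S (σh x) := by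
          intro x; constructor
          · rintro ⟨e, rfl⟩; exact ⟨σ'' e, hq0σ e⟩
          · rintro ⟨e, he⟩
            refine ⟨σ''⁻¹ e, σh.injective ?_⟩
            rw [← hq0σ, Equiv.Perm.apply_inv_self, he]
        have hSα : ∀ x, S x ↔ S (αh x) := by
          intro x; constructor
          · rintro ⟨e, rfl⟩; exact ⟨α'' e, hq0α e⟩
          · rintro ⟨e, he⟩
            refine ⟨α'' e, ?_⟩
            rw [hq0α, he]; exact hαhinv x
        have hSbase : S base := ⟨e₀, hq0base⟩
        rintro ⟨x, hx⟩
        obtain ⟨w, hw, hwx⟩ := hx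
        obtain ⟨e, he⟩ := hwx ▸ (closure_pair_iff σh αh S hSσ hSα w hw base).mp hSbase
        exact ⟨e, Subtype.ext he⟩
      · intro e; exact Subtype.ext (hq0σ e)
      · intro e; exact Subtype.ext (hq0α e)
      · intro e₁ e₂ hcyc heq
        exact hrcov.2.2.2 e₁ e₂ hcyc (congrArg (fun z : {x : D × G // reach x} => z.val.1) heq)
      · funext e; rfl
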